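/- Let V be a finite-dimensional complex inner product space, let ψ, δψ ∈ V with ψ ≠ 0, and define the Fubini–Study distance s(ψ,φ) = arccos √( |⟨ψ,φ⟩|² / (‖ψ‖² ‖φ‖²) ) for φ ≠ 0. Then lim_{t→0, t∈ℝ} s(ψ, ψ + t δψ)² / t² = ( ‖δψ‖² ‖ψ‖² − |⟨ψ,δψ⟩|² ) / ‖ψ‖⁴. -/

import Mathlib

open scoped InnerProductSpace
open Real Filter

private lemma aux_sin_ratio :
    Tendsto (fun u : ℝ => u^2 / Real.sin u ^ 2) (nhdsWithin 0 {(0:ℝ)}ᶜ) (nhds 1) := by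
  have h1 : Tendsto (fun u : ℝ => Real.sin u / u) (nhdsWithin 0 {(0:ℝ)}ᶜ) (nhds 1) := by
    have := (hasDerivAt_iff_tendsto_slope).1 (Real.hasDerivAt_sin 0)
    simp only [Real.cos_zero] at this
    refine this.congr (fun u => ?_)
    simp [slope_def_field, Real.sin_zero]
  have h2 : Tendsto (fun u : ℝ => (Real.sin u / u)⁻¹) (nhdsWithin 0 {(0:ℝ)}ᶜ) (nhds 1) := by
    simpa using h1.inv₀ one_ne_zero
  have hev : ∀ᶠ u in nhdsWithin (0:ℝ) {(0:ℝ)}ᶜ, (Real.sin u / u)⁻¹ = u / Real.sin u := by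
    have hmem : Set.Ioo (-π) π ∈ nhds (0:ℝ) :=
      Ioo_mem_nhds (by linarith [Real.pi_pos]) Real.pi_pos
    filter_upwards [nhdsWithin_le_nhds hmem, self_mem_nhdsWithin] with u hu hu0
    have hu0' : u ≠ 0 := hu0
    have hsin : Real.sin u ≠ 0 := by
      rcases lt_or_gt_of_ne hu0' with h | h
      · have : 0 < Real.sin (-u) :=
          Real.sin_pos_of_pos_of_lt_pi (by linarith) (by linarith [hu.1])
        rw [Real.sin_neg] at this; linarith
      · exact (Real.sin_pos_of_pos_of_lt_pi h hu.2).ne'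
    rw [inv_div]
  have h3 : Tendsto (fun u : ℝ => u / Real.sin u) (nhdsWithin 0 {(0:ℝ)}ᶜ) (nhds 1) :=
    h2.congr' hev
  have h4 := h3.pow 2
  simp only [one_pow] at h4
  exact h4.congr (fun u => by rw [div_pow])

private lemma aux_key_id (V : Type*) [NormedAddCommGroup V] [InnerProductSpace ℂ V]
    (ψ δψ : V) (t : ℝ) :
    ‖ψ‖^2 * ‖ψ + t • δψ‖^2 - ‖(⟪ψ, ψ + t • δψ⟫_ℂ : ℂ)‖^2
      = t^2 * (‖δψ‖^2 * ‖ψ‖^2 - ‖(⟪ψ, δψ⟫_ℂ : ℂ)‖^2) := by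
  have hsm : t • δψ = (t : ℂ) • δψ := (Complex.coe_smul t δψ).symm
  have hin : (⟪ψ, ψ + t • δψ⟫_ℂ : ℂ) = ((‖ψ‖^2 : ℝ) : ℂ) + (t:ℂ) * ⟪ψ, δψ⟫_ℂ := by
    rw [inner_add_right, hsm, inner_smul_right, inner_self_eq_norm_sq_to_K,
      Complex.ofReal_pow]
    rfl
  have hnorm : ‖ψ + t • δψ‖^2
      = ‖ψ‖^2 + 2 * (t * (⟪ψ, δψ⟫_ℂ : ℂ).re) + t^2 * ‖δψ‖^2 := by
    rw [norm_add_sq (𝕜 := ℂ), hsm, inner_smul_right, norm_smul]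
    simp only [RCLike.mul_re, Complex.ofReal_re, Complex.ofReal_im, mul_pow]
    simp [Complex.norm_real, sq_abs]
  have hN : ‖(⟪ψ, ψ + t • δψ⟫_ℂ : ℂ)‖^2
      = (‖ψ‖^2 + t * (⟪ψ, δψ⟫_ℂ : ℂ).re)^2 + (t * (⟪ψ, δψ⟫_ℂ : ℂ).im)^2 := by
    rw [hin, Complex.sq_norm, Complex.normSq_apply]
    simp [← Complex.ofReal_pow, Complex.add_re, Complex.add_im, Complex.mul_re,
      Complex.mul_im, Complex.ofReal_re, Complex.ofReal_im]
    ring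
  have hcn : ‖(⟪ψ, δψ⟫_ℂ : ℂ)‖^2 = (⟪ψ, δψ⟫_ℂ : ℂ).re^2 + (⟪ψ, δψ⟫_ℂ : ℂ).im^2 := by
    rw [Complex.sq_norm, Complex.normSq_apply]; ring
  rw [hN, hnorm, hcn]; ring

/-- SM equations (A12)–(A13) of the paper: the infinitesimal Fubini–Study
distance.  With `s(ψ,φ) = arccos √(|⟨ψ,φ⟩|²/(‖ψ‖²‖φ‖²))` on a finite-dimensional
complex inner product space, one has
`lim_{t→0, t≠0} s(ψ, ψ + t δψ)²/t² = (‖δψ‖²‖ψ‖² − |⟨ψ,δψ⟩|²)/‖ψ‖⁴`. -/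
theorem stmt_16 (V : Type*) [NormedAddCommGroup V] [InnerProductSpace ℂ V]
    [FiniteDimensional ℂ V] (ψ δψ : V) (hψ : ψ ≠ 0)
    (s : V → V → ℝ)
    (hs : ∀ a b : V,
      s a b = Real.arccos (Real.sqrt (‖(⟪a, b⟫_ℂ : ℂ)‖ ^ 2 / (‖a‖ ^ 2 * ‖b‖ ^ 2)))) :
    Filter.Tendsto (fun t : ℝ => (s ψ (ψ + t • δψ)) ^ 2 / t ^ 2)
      (nhdsWithin (0 : ℝ) {(0 : ℝ)}ᶜ)
      (nhds ((‖δψ‖ ^ 2 * ‖ψ‖ ^ 2 - ‖(⟪ψ, δψ⟫_ℂ : ℂ)‖ ^ 2) / ‖ψ‖ ^ 4)) := by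
  have ha : (0:ℝ) < ‖ψ‖ := norm_pos_iff.mpr hψ
  set K : ℝ := ‖δψ‖ ^ 2 * ‖ψ‖ ^ 2 - ‖(⟪ψ, δψ⟫_ℂ : ℂ)‖ ^ 2 with hK
  set N : ℝ → ℝ := fun t => ‖(⟪ψ, ψ + t • δψ⟫_ℂ : ℂ)‖ ^ 2 with hNdef
  set D : ℝ → ℝ := fun t => ‖ψ‖ ^ 2 * ‖ψ + t • δψ‖ ^ 2 with hDdef
  have hkey : ∀ t : ℝ, D t - N t = t ^ 2 * K := fun t => aux_key_id V ψ δψ t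
  have hNcont : Continuous N := by
    apply Continuous.pow
    apply Continuous.norm
    exact Continuous.inner continuous_const (continuous_const.add (continuous_id.smul continuous_const))
  have hDcont : Continuous D := by
    apply Continuous.mul continuous_const
    exact ((continuous_const.add (continuous_id.smul continuous_const)).norm.pow 2)
  have hD0 : D 0 = ‖ψ‖ ^ 4 := by simp [hDdef]; ring
  have hD0pos : (0:ℝ) < D 0 := by rw [hD0]; positivity
  have hN0 : N 0 = ‖ψ‖ ^ 4 := by
    simp only [hNdef, zero_smul, add_zero, inner_self_eq_norm_sq_to_K]
    rw [norm_pow, RCLike.norm_ofReal, abs_of_nonneg (norm_nonneg ψ)]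
    ring
  have hDev : ∀ᶠ t in nhds (0:ℝ), 0 < D t :=
    (hDcont.tendsto 0).eventually (eventually_gt_nhds hD0pos)
  have hCS : (0:ℝ) ≤ K := by
    have h := norm_inner_le_norm (𝕜 := ℂ) ψ δψ
    have h2 : ‖(⟪ψ, δψ⟫_ℂ : ℂ)‖^2 ≤ (‖ψ‖ * ‖δψ‖)^2 := by
      apply pow_le_pow_left₀ (norm_nonneg _) h _
    rw [hK]; nlinarith
  rcases hCS.eq_or_lt with hK0 | hKpos
  · -- degenerate case : K = 0, the function is eventually 0
    have hval : (K : ℝ) / ‖ψ‖ ^ 4 = 0 := by rw [← hK0, zero_div]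
    rw [hval]
    apply Tendsto.congr' _ tendsto_const_nhds
    filter_upwards [nhdsWithin_le_nhds hDev] with t hDt
    have hNt : N t = D t := by have := hkey t; rw [← hK0] at this; linarith
    have : s ψ (ψ + t • δψ) = 0 := by
      rw [hs]
      show Real.arccos (Real.sqrt (N t / D t)) = 0
      rw [hNt, div_self hDt.ne', Real.sqrt_one, Real.arccos_one]
    rw [this]
    simp
  · -- main case : K > 0
    set u : ℝ → ℝ := fun t => Real.arccos (Real.sqrt (N t / D t)) with hudef
    have hFlim : Tendsto (fun t => N t / D t) (nhds 0) (nhds 1) := by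
      have := (hNcont.tendsto 0).div (hDcont.tendsto 0) hD0pos.ne'
      rwa [hN0, hD0, div_self (by positivity : (‖ψ‖:ℝ)^4 ≠ 0)] at this
    have hulim : Tendsto u (nhds 0) (nhds 0) := by
      have h1 : Tendsto (fun t => Real.sqrt (N t / D t)) (nhds 0) (nhds 1) := by
        have := (Real.continuous_sqrt.tendsto 1).comp hFlim
        rwa [Real.sqrt_one] at this
      have := (Real.continuous_arccos.tendsto 1).comp h1
      rwa [Real.arccos_one] at this
    have hevF : ∀ᶠ t in nhdsWithin (0:ℝ) {(0:ℝ)}ᶜ, (0 < D t ∧ t ≠ 0) := by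
      filter_upwards [nhdsWithin_le_nhds hDev, self_mem_nhdsWithin] with t h1 h2
      exact ⟨h1, h2⟩
    have hFlt : ∀ t : ℝ, 0 < D t → t ≠ 0 → N t / D t < 1 := by
      intro t hDt ht
      rw [div_lt_one hDt]
      have h1 := hkey t
      have h2 : 0 < t ^ 2 := by positivity
      nlinarith
    have hFnonneg : ∀ t : ℝ, 0 < D t → 0 ≤ N t / D t := fun t hDt =>
      div_nonneg (by positivity) hDt.le
    have hupos : ∀ t : ℝ, 0 < D t → t ≠ 0 → 0 < u t := by
      intro t hDt ht
      apply Real.arccos_pos.mpr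
      have h1 : Real.sqrt (N t / D t) < Real.sqrt 1 :=
        Real.sqrt_lt_sqrt (hFnonneg t hDt) (hFlt t hDt ht)
      rwa [Real.sqrt_one] at h1
    have huW : Tendsto u (nhdsWithin (0:ℝ) {(0:ℝ)}ᶜ) (nhdsWithin (0:ℝ) {(0:ℝ)}ᶜ) := by
      rw [tendsto_nhdsWithin_iff]
      constructor
      · exact hulim.mono_left nhdsWithin_le_nhds
      · filter_upwards [hevF] with t ⟨h1, h2⟩
        exact (hupos t h1 h2).ne'
    have hratio : Tendsto (fun t => (u t)^2 / Real.sin (u t) ^ 2)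
        (nhdsWithin (0:ℝ) {(0:ℝ)}ᶜ) (nhds 1) := aux_sin_ratio.comp huW
    have hquot : Tendsto (fun t => K / D t) (nhdsWithin (0:ℝ) {(0:ℝ)}ᶜ)
        (nhds (K / ‖ψ‖ ^ 4)) := by
      have := (tendsto_const_nhds (x := K)).div (hDcont.tendsto 0) hD0pos.ne'
      rw [hD0] at this
      exact this.mono_left nhdsWithin_le_nhds
    have hmul := hratio.mul hquot
    rw [one_mul] at hmul
    apply Tendsto.congr' _ hmul
    filter_upwards [hevF] with t ⟨hDt, ht⟩
    have hF0 := hFnonneg t hDt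
    have hF1 := hFlt t hDt ht
    have hut := hupos t hDt ht
    have hsin2 : Real.sin (u t) ^ 2 = 1 - N t / D t := by
      rw [hudef]
      simp only
      rw [Real.sin_arccos, Real.sq_sqrt hF0, Real.sq_sqrt (by linarith)]
    have h1F : 1 - N t / D t = t ^ 2 * K / D t := by
      rw [← hkey t]; field_simp
    have hst : s ψ (ψ + t • δψ) = u t := by rw [hs]
    rw [hst, hsin2, h1F]
    have hKne : K ≠ 0 := hKpos.ne'
    field_simp
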